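/- Let M be a commutative binoid and e ∈ M an idempotent element, and let q : M → M/(e ∼ 1) be the quotient by the smallest monoid congruence identifying e with 1. Then for every idempotent z of M/(e ∼ 1) there exists an idempotent u of M with q(u) = z. -/

import Mathlib

/-- The smallest monoid congruence identifying `a` with `1`; its quotient is `M/(a ∼ 1)`. -/
def aCon {M : Type*} [CommMonoidWithZero M] (a : M) : Con M :=
  conGen fun x y => x = a ∧ y = 1

/-- The explicit congruence `x ∼ y ↔ ∃ m n, x * a^m = y * a^n`. -/
def expCon {M : Type*} [CommMonoidWithZero M] (a : M) : Con M where
  r x y := ∃ m n : ℕ, x * a ^ m = y * a ^ n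
  iseqv := by
    refine ⟨fun x => ⟨0, 0, rfl⟩, ?_, ?_⟩
    · rintro x y ⟨m, n, h⟩; exact ⟨n, m, h.symm⟩
    · rintro x y z ⟨m, n, h1⟩ ⟨p, q, h2⟩
      refine ⟨m + p, q + n, ?_⟩
      calc x * a ^ (m + p) = (x * a ^ m) * a ^ p := by rw [pow_add, mul_assoc]
        _ = (y * a ^ p) * a ^ n := by rw [h1, mul_right_comm]
        _ = (z * a ^ q) * a ^ n := by rw [h2]
        _ = z * a ^ (q + n) := by rw [pow_add, mul_assoc]
  mul' := by
    rintro w x y z ⟨m, n, h1⟩ ⟨p, q, h2⟩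
    refine ⟨m + p, n + q, ?_⟩
    calc w * y * a ^ (m + p) = (w * a ^ m) * (y * a ^ p) := by
          rw [pow_add, mul_mul_mul_comm]
      _ = (x * a ^ n) * (z * a ^ q) := by rw [h1, h2]
      _ = x * z * a ^ (n + q) := by rw [pow_add, mul_mul_mul_comm]

theorem aCon_le_expCon {M : Type*} [CommMonoidWithZero M] (a : M) :
    aCon a ≤ expCon a := by
  apply Con.conGen_le.mpr
  rintro x y ⟨rfl, rfl⟩
  exact ⟨0, 1, by simp⟩

theorem pow_mul_self {M : Type*} [CommMonoidWithZero M] (e : M) (he : e * e = e) (k : ℕ) :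
    e ^ k * e = e := by
  induction k with
  | zero => simp
  | succ n ih => rw [pow_succ, mul_assoc, he, ih]

/-- Let `M` be a commutative binoid and `e ∈ M` an idempotent, and
`q : M → M/(e ∼ 1)` the quotient by the smallest monoid congruence identifying `e` with `1`.
Then every idempotent of `M/(e ∼ 1)` lifts to an idempotent of `M`. -/
theorem idempotent_lift_of_quotient_idem_one {M : Type*} [CommMonoidWithZero M]
    (e : M) (he : e * e = e) :
    ∀ z : (aCon e).Quotient, z * z = z → ∃ u : M, u * u = u ∧ (aCon e).mk' u = z := by
  intro z hz
  obtain ⟨x, rfl⟩ := Con.mk'_surjective z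
  have hrel : (aCon e) (x * x) x := by
    rw [← Con.eq (c := aCon e)]
    rw [← map_mul] at hz
    simpa [Con.coe_mk'] using hz
  obtain ⟨m, n, h⟩ := aCon_le_expCon e hrel
  -- multiply by e : x^2 * e = x * e
  have key : (x * x) * e = x * e := by
    have := congrArg (· * e) h
    simpa [mul_assoc, pow_mul_self e he] using this
  refine ⟨x * e, ?_, ?_⟩
  · calc x * e * (x * e) = (x * x) * (e * e) := mul_mul_mul_comm ..
      _ = (x * x) * e := by rw [he]
      _ = x * e := key
  · have h1 : (aCon e).mk' e = 1 := by
      rw [Con.coe_mk', ← Con.coe_one, Con.eq]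
      exact ConGen.Rel.of _ _ ⟨rfl, rfl⟩
    rw [map_mul, h1, mul_one]
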